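/- (Lower bound, Many-to-Many, average error.) Let K ≥ 2, let X be a countable type, and for each pair i, k ∈ {0,…,K−1} let D_{i,k} be a probability distribution (PMF) on X and f_{i,k} : X → Y a ground-truth translator into a countable type Y. Let Z be a measurable space and g : X → Z satisfy, for every k and every i ≠ j, d_TV(g♯D_{i,k}, g♯D_{j,k}) ≤ ε. Then for every measurable decoder h : Z → Y, (1/K²)·Σ_{i,k} Pr_{X∼D_{i,k}}(h(g(X)) ≠ f_{i,k}(X)) ≥ (1/(K²(K−1)))·Σ_{k} Σ_{i<j} d_TV(f_{i,k}♯D_{i,k}, f_{j,k}♯D_{j,k}) − ε/2. -/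

import Mathlib

open MeasureTheory

/-- Total variation distance between two measures: supremum over measurable events of
the absolute difference of the probabilities. -/
noncomputable def tvDist {α : Type*} [MeasurableSpace α] (P Q : Measure α) : ℝ :=
  ⨆ E : {s : Set α // MeasurableSet s}, |(P E.1).toReal - (Q E.1).toReal|

section aux

variable {α : Type*} [MeasurableSpace α]

instance : Nonempty {s : Set α // MeasurableSet s} := ⟨⟨∅, MeasurableSet.empty⟩⟩

lemma tvDist_bddAbove (P Q : Measure α) [IsProbabilityMeasure P] [IsProbabilityMeasure Q] :
    BddAbove (Set.range fun E : {s : Set α // MeasurableSet s} =>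
      |(P E.1).toReal - (Q E.1).toReal|) := by
  refine ⟨1, ?_⟩
  rintro x ⟨E, rfl⟩
  have h1 : (P E.1).toReal ≤ 1 := by
    simpa using ENNReal.toReal_mono (by simp) (prob_le_one (μ := P) (s := E.1))
  have h2 : (Q E.1).toReal ≤ 1 := by
    simpa using ENNReal.toReal_mono (by simp) (prob_le_one (μ := Q) (s := E.1))
  have h3 : 0 ≤ (P E.1).toReal := ENNReal.toReal_nonneg
  have h4 : 0 ≤ (Q E.1).toReal := ENNReal.toReal_nonneg
  rw [abs_sub_le_iff]; constructor <;> linarith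

lemma le_tvDist (P Q : Measure α) [IsProbabilityMeasure P] [IsProbabilityMeasure Q]
    {E : Set α} (hE : MeasurableSet E) :
    |(P E).toReal - (Q E).toReal| ≤ tvDist P Q :=
  le_ciSup (tvDist_bddAbove P Q) ⟨E, hE⟩

lemma tvDist_le {P Q : Measure α} {c : ℝ}
    (h : ∀ s : Set α, MeasurableSet s → |(P s).toReal - (Q s).toReal| ≤ c) :
    tvDist P Q ≤ c :=
  ciSup_le fun E => h E.1 E.2

lemma tvDist_triangle (P Q R : Measure α) [IsProbabilityMeasure P] [IsProbabilityMeasure Q]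
    [IsProbabilityMeasure R] : tvDist P R ≤ tvDist P Q + tvDist Q R := by
  refine tvDist_le fun s hs => ?_
  calc |(P s).toReal - (R s).toReal|
      ≤ |(P s).toReal - (Q s).toReal| + |(Q s).toReal - (R s).toReal| := abs_sub_le _ _ _
    _ ≤ tvDist P Q + tvDist Q R := add_le_add (le_tvDist P Q hs) (le_tvDist Q R hs)

end aux

section key

variable {X Y Z : Type*}
    [Countable X] [MeasurableSpace X] [DiscreteMeasurableSpace X]
    [Countable Y] [MeasurableSpace Y] [DiscreteMeasurableSpace Y]
    [MeasurableSpace Z]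

/-- coupling bound: tv between two pushforwards of the same PMF is at most the
probability that the two maps disagree. -/
lemma tv_map_le_disagree (D : PMF X) (f0 f1 : X → Y) :
    tvDist ((D.map f0)).toMeasure ((D.map f1)).toMeasure
      ≤ (D.toMeasure {x | f0 x ≠ f1 x}).toReal := by
  refine tvDist_le fun s hs => ?_
  rw [PMF.toMeasure_map_apply _ _ _ Measurable.of_discrete hs,
    PMF.toMeasure_map_apply _ _ _ Measurable.of_discrete hs]
  set μ := D.toMeasure
  have key : ∀ a b : X → Y, (μ (a ⁻¹' s)).toReal - (μ (b ⁻¹' s)).toReal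
      ≤ (μ {x | a x ≠ b x}).toReal := by
    intro a b
    have hsub : a ⁻¹' s ⊆ b ⁻¹' s ∪ {x | a x ≠ b x} := by
      intro x hx
      by_cases hab : a x = b x
      · left; rw [Set.mem_preimage, ← hab]; exact hx
      · right; exact hab
    have h1 : μ (a ⁻¹' s) ≤ μ (b ⁻¹' s) + μ {x | a x ≠ b x} :=
      le_trans (measure_mono hsub) (measure_union_le _ _)
    have h2 : (μ (a ⁻¹' s)).toReal ≤ (μ (b ⁻¹' s)).toReal + (μ {x | a x ≠ b x}).toReal := by
      rw [← ENNReal.toReal_add (measure_ne_top _ _) (measure_ne_top _ _)]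
      exact ENNReal.toReal_mono (ENNReal.add_ne_top.mpr ⟨measure_ne_top _ _, measure_ne_top _ _⟩) h1
    linarith
  rw [abs_sub_le_iff]
  constructor
  · exact key f0 f1
  · have := key f1 f0
    have heq : {x | f1 x ≠ f0 x} = {x | f0 x ≠ f1 x} := by ext x; exact ne_comm
    rwa [heq] at this

/-- data processing inequality for the decoder. -/
lemma tv_data_proc (Di Dj : PMF X) (g : X → Z) {h : Z → Y} (hh : Measurable h) :
    tvDist ((Di.map (h ∘ g))).toMeasure ((Dj.map (h ∘ g))).toMeasure
      ≤ tvDist ((Di.map g)).toMeasure ((Dj.map g)).toMeasure := by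
  refine tvDist_le fun s hs => ?_
  rw [← PMF.map_comp, ← PMF.map_comp,
    PMF.toMeasure_map_apply _ _ _ hh hs, PMF.toMeasure_map_apply _ _ _ hh hs]
  exact le_tvDist _ _ (hh hs)

lemma key_bound (Di Dj : PMF X) (fi fj : X → Y) (g : X → Z) {h : Z → Y}
    (hh : Measurable h) {ε : ℝ}
    (hε : tvDist ((Di.map g)).toMeasure ((Dj.map g)).toMeasure ≤ ε) :
    tvDist ((Di.map fi)).toMeasure ((Dj.map fj)).toMeasure
      ≤ (Di.toMeasure {x | h (g x) ≠ fi x}).toReal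
        + (Dj.toMeasure {x | h (g x) ≠ fj x}).toReal + ε := by
  have t1 := tvDist_triangle ((Di.map fi)).toMeasure ((Di.map (h ∘ g))).toMeasure
    ((Dj.map fj)).toMeasure
  have t2 := tvDist_triangle ((Di.map (h ∘ g))).toMeasure ((Dj.map (h ∘ g))).toMeasure
    ((Dj.map fj)).toMeasure
  have b1 := tv_map_le_disagree Di fi (h ∘ g)
  have b2 := tv_map_le_disagree Dj (h ∘ g) fj
  have b3 := le_trans (tv_data_proc Di Dj g hh) hε
  have e1 : {x | fi x ≠ (h ∘ g) x} = {x | h (g x) ≠ fi x} := by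
    ext x; exact ne_comm
  have e2 : {x | (h ∘ g) x ≠ fj x} = {x | h (g x) ≠ fj x} := rfl
  rw [e1] at b1; rw [e2] at b2
  linarith

end key

lemma pair_sum {K : ℕ} (a : Fin K → ℝ) :
    ∑ p ∈ Finset.univ.filter (fun p : Fin K × Fin K => p.1 < p.2), (a p.1 + a p.2)
      = ((K : ℝ) - 1) * ∑ i, a i := by
  have hswap : ∑ p ∈ Finset.univ.filter (fun p : Fin K × Fin K => p.1 < p.2), a p.2
      = ∑ p ∈ Finset.univ.filter (fun p : Fin K × Fin K => p.2 < p.1), a p.1 := by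
    refine Finset.sum_nbij' Prod.swap Prod.swap ?_ ?_ ?_ ?_ ?_ <;>
      simp [Finset.mem_filter]
  have hsplit : ∑ p ∈ Finset.univ.filter (fun p : Fin K × Fin K => p.1 < p.2), a p.1
      + ∑ p ∈ Finset.univ.filter (fun p : Fin K × Fin K => p.2 < p.1), a p.1
      = ∑ p ∈ Finset.univ.filter (fun p : Fin K × Fin K => p.1 ≠ p.2), a p.1 := by
    rw [← Finset.sum_union]
    · congr 1
      ext p
      simp only [Finset.mem_union, Finset.mem_filter, Finset.mem_univ, true_and]
      omega
    · rw [Finset.disjoint_filter]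
      intro p _ h1 h2
      omega
  have hne : ∑ p ∈ Finset.univ.filter (fun p : Fin K × Fin K => p.1 ≠ p.2), a p.1
      = ((K : ℝ) - 1) * ∑ i, a i := by
    rw [Finset.sum_filter, Fintype.sum_prod_type]
    have : ∀ i : Fin K, ∑ j : Fin K, (if i ≠ j then a i else 0) = ((K : ℝ) - 1) * a i := by
      intro i
      have : ∑ j : Fin K, (if i ≠ j then a i else 0)
          = ∑ j : Fin K, (a i - if i = j then a i else 0) := by
        apply Finset.sum_congr rfl
        intro j _
        by_cases hij : i = j <;> simp [hij]
      rw [this, Finset.sum_sub_distrib, Finset.sum_ite_eq]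
      simp
      have hK1 : 1 ≤ K := Fin.pos i
      push_cast
      ring
    rw [Finset.sum_congr rfl fun i _ => this i, ← Finset.mul_sum]
  rw [Finset.sum_add_distrib, hswap, hsplit, hne]

/-- Lower bound, Many-to-Many, average error. Here `D i k` is the marginal over source
sentences of the parallel corpus for translating language `i` into language `k`, and
`f i k` is the corresponding ground-truth translator. If `g` is an `ε`-universal language
mapping, then for any measurable decoder `h`, the average translation error over all
pairs `(i, k)` is at least `1/(K²(K-1))` times the sum over targets `k` and sources
`i < j` of the total variation distances of the target marginals, minus `ε / 2`. -/
theorem many_to_many_avg_lower_bound {X Y Z : Type*}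
    [Countable X] [MeasurableSpace X] [DiscreteMeasurableSpace X]
    [Countable Y] [MeasurableSpace Y] [DiscreteMeasurableSpace Y]
    [MeasurableSpace Z]
    (K : ℕ) (hK : 2 ≤ K)
    (D : Fin K → Fin K → PMF X) (f : Fin K → Fin K → X → Y) (g : X → Z) (ε : ℝ)
    (hg : ∀ k i j, i ≠ j →
      tvDist ((D i k).map g).toMeasure ((D j k).map g).toMeasure ≤ ε)
    {h : Z → Y} (hh : Measurable h) :
    (1 / (K : ℝ) ^ 2) * ∑ i : Fin K, ∑ k : Fin K,
        ((D i k).toMeasure {x | h (g x) ≠ f i k x}).toReal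
      ≥ (1 / ((K : ℝ) ^ 2 * ((K : ℝ) - 1))) * ∑ k : Fin K,
          ∑ p ∈ Finset.univ.filter (fun p : Fin K × Fin K => p.1 < p.2),
            tvDist ((D p.1 k).map (f p.1 k)).toMeasure
              ((D p.2 k).map (f p.2 k)).toMeasure
        - ε / 2 := by
  set E : Fin K → Fin K → ℝ :=
    fun i k => ((D i k).toMeasure {x | h (g x) ≠ f i k x}).toReal with hE
  set S : ℝ := ∑ k : Fin K,
      ∑ p ∈ Finset.univ.filter (fun p : Fin K × Fin K => p.1 < p.2),
        tvDist ((D p.1 k).map (f p.1 k)).toMeasure ((D p.2 k).map (f p.2 k)).toMeasure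
    with hS
  set T : ℝ := ∑ i : Fin K, ∑ k : Fin K, E i k with hT
  have hc : (2 : ℝ) ≤ (K : ℝ) := by exact_mod_cast hK
  -- main bound: S ≤ (K-1) * T + K^2 * (K-1) * ε / 2
  have hmain : S ≤ ((K : ℝ) - 1) * T + (K : ℝ) ^ 2 * ((K : ℝ) - 1) * ε / 2 := by
    have hk : ∀ k : Fin K,
        ∑ p ∈ Finset.univ.filter (fun p : Fin K × Fin K => p.1 < p.2),
          tvDist ((D p.1 k).map (f p.1 k)).toMeasure ((D p.2 k).map (f p.2 k)).toMeasure
        ≤ ((K : ℝ) - 1) * ∑ i, (E i k + ε / 2) := by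
      intro k
      rw [← pair_sum (fun i => E i k + ε / 2)]
      refine Finset.sum_le_sum fun p hp => ?_
      simp only [Finset.mem_filter] at hp
      have hne : p.1 ≠ p.2 := ne_of_lt hp.2
      have := key_bound (D p.1 k) (D p.2 k) (f p.1 k) (f p.2 k) g hh (hg k p.1 p.2 hne)
      simp only [hE]
      linarith
    calc S ≤ ∑ k : Fin K, ((K : ℝ) - 1) * ∑ i, (E i k + ε / 2) :=
          Finset.sum_le_sum fun k _ => hk k
      _ = ((K : ℝ) - 1) * T + (K : ℝ) ^ 2 * ((K : ℝ) - 1) * ε / 2 := by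
          rw [hT, Finset.sum_comm]
          simp only [Finset.sum_add_distrib, mul_add, Finset.sum_const, Finset.card_univ,
            Fintype.card_fin, nsmul_eq_mul, ← Finset.mul_sum]
          ring
  rw [ge_iff_le, sub_le_iff_le_add]
  have hpos : (0 : ℝ) < (K : ℝ) ^ 2 * ((K : ℝ) - 1) := by nlinarith
  calc (1 / ((K : ℝ) ^ 2 * ((K : ℝ) - 1))) * S
      ≤ (1 / ((K : ℝ) ^ 2 * ((K : ℝ) - 1))) *
        (((K : ℝ) - 1) * T + (K : ℝ) ^ 2 * ((K : ℝ) - 1) * ε / 2) :=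
        mul_le_mul_of_nonneg_left hmain (by positivity)
    _ = 1 / (K : ℝ) ^ 2 * T + ε / 2 := by
        have hK1 : (K : ℝ) - 1 ≠ 0 := by linarith
        have hK0 : (K : ℝ) ≠ 0 := by linarith
        field_simp
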